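/- Let p be a polynomial in n variables with nonnegative real coefficients and let α ∈ ℝ₊ⁿ be a point not in the Newton polytope of p. Then inf over z > 0 of p(z)/∏ᵢ zᵢ^(αᵢ) equals 0. -/

import Mathlib

open Finset Real MvPolynomial

private lemma clm_apply_eq_sum (n : ℕ) (f : (Fin n → ℝ) →L[ℝ] ℝ) (x : Fin n → ℝ) :
    f x = ∑ i, x i * f (Pi.single i 1) := by
  conv_lhs => rw [pi_eq_sum_univ x]
  rw [map_sum]
  refine Finset.sum_congr rfl fun i _ => ?_
  rw [map_smul, smul_eq_mul]
  congr 2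
  ext j
  simp [Pi.single_apply, eq_comm]

theorem inf_zero_of_not_mem_newton (n : ℕ) (p : MvPolynomial (Fin n) ℝ)
    (hp : ∀ κ, 0 ≤ p.coeff κ) (α : Fin n → ℝ) (hα : ∀ i, 0 ≤ α i)
    (hmem : α ∉ convexHull ℝ
      ((fun κ : Fin n →₀ ℕ => fun i => (κ i : ℝ)) '' ↑p.support)) :
    (⨅ z : {z : Fin n → ℝ // ∀ i, 0 < z i},
        MvPolynomial.eval z.val p / ∏ i, (z.val i) ^ (α i)) = 0 := by
  haveI : Nonempty {z : Fin n → ℝ // ∀ i, 0 < z i} := ⟨⟨fun _ => 1, fun _ => one_pos⟩⟩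
  set F : {z : Fin n → ℝ // ∀ i, 0 < z i} → ℝ :=
    fun z => MvPolynomial.eval z.val p / ∏ i, (z.val i) ^ (α i) with hF
  have hnonneg : ∀ z, 0 ≤ F z := by
    intro z
    apply div_nonneg
    · rw [eval_eq]
      refine Finset.sum_nonneg fun κ _ => mul_nonneg (hp κ) (Finset.prod_nonneg fun i _ =>
        pow_nonneg (z.2 i).le _)
    · exact Finset.prod_nonneg fun i _ => (rpow_nonneg (z.2 i).le _)
  have hbdd : BddBelow (Set.range F) := ⟨0, by rintro _ ⟨z, rfl⟩; exact hnonneg z⟩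
  -- separation
  set S : Set (Fin n → ℝ) := (fun κ : Fin n →₀ ℕ => fun i => (κ i : ℝ)) '' ↑p.support with hS
  have hSfin : S.Finite := (p.support.finite_toSet).image _
  obtain ⟨f, u, hfS, hfα⟩ :=
    _root_.geometric_hahn_banach_closed_point (convex_convexHull ℝ S)
      (hSfin.isCompact_convexHull (𝕜 := ℝ)).isClosed hmem
  set c : Fin n → ℝ := fun i => f (Pi.single i 1) with hc
  have hrep : ∀ x : Fin n → ℝ, f x = ∑ i, x i * c i := clm_apply_eq_sum n f
  set δ : ℝ := f α - u with hδ
  have hδpos : 0 < δ := sub_pos.2 hfα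
  -- the key small-value estimate
  have key : ∀ ε > (0:ℝ), ∃ z, F z < ε := by
    intro ε hε
    set M : ℝ := ∑ κ ∈ p.support, p.coeff κ with hM
    have hM0 : 0 ≤ M := Finset.sum_nonneg fun κ _ => hp κ
    have hε' : 0 < ε / (M + 1) := div_pos hε (by linarith)
    set L : ℝ := Real.log (ε / (M + 1)) with hL
    set t : ℝ := (1 + |L|) / δ with ht
    have htpos : 0 < t := div_pos (by positivity) hδpos
    set z : Fin n → ℝ := fun i => Real.exp (t * c i) with hz
    have hzpos : ∀ i, 0 < z i := fun i => Real.exp_pos _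
    refine ⟨⟨z, hzpos⟩, ?_⟩
    have hden : (∏ i, z i ^ (α i)) = Real.exp (t * f α) := by
      rw [hrep α, Finset.mul_sum, Real.exp_sum]
      refine Finset.prod_congr rfl fun i _ => ?_
      rw [Real.rpow_def_of_pos (hzpos i), Real.log_exp]
      ring_nf
    have hnum : MvPolynomial.eval z p =
        ∑ κ ∈ p.support, p.coeff κ * Real.exp (t * f (fun i => (κ i : ℝ))) := by
      rw [eval_eq]
      refine Finset.sum_congr rfl fun κ _ => ?_
      congr 1
      have hext : ∏ i ∈ κ.support, z i ^ κ i = ∏ i, z i ^ κ i :=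
        Finset.prod_subset (Finset.subset_univ _) fun i _ hi => by
          rw [Finsupp.notMem_support_iff.1 hi, pow_zero]
      rw [hext, hrep, Finset.mul_sum, Real.exp_sum]
      refine Finset.prod_congr rfl fun i _ => ?_
      rw [← Real.exp_nat_mul]
      ring_nf
    have hFz : F ⟨z, hzpos⟩ =
        ∑ κ ∈ p.support, p.coeff κ * Real.exp (t * f (fun i => (κ i : ℝ)) - t * f α) := by
      simp only [hF, hnum, hden, Finset.sum_div]
      refine Finset.sum_congr rfl fun κ _ => ?_
      rw [mul_div_assoc, Real.exp_sub]
    rw [hFz]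
    have hbound : ∀ κ ∈ p.support,
        p.coeff κ * Real.exp (t * f (fun i => (κ i : ℝ)) - t * f α)
          ≤ p.coeff κ * Real.exp (-t * δ) := by
      intro κ hκ
      refine mul_le_mul_of_nonneg_left (Real.exp_le_exp.2 ?_) (hp κ)
      have hfu : f (fun i => (κ i : ℝ)) < u :=
        hfS _ (subset_convexHull ℝ S ⟨κ, hκ, rfl⟩)
      nlinarith [htpos, hfu, hδ]
    have htδ : t * δ = 1 + |L| := by
      rw [ht]; field_simp
    have hexp1 : Real.exp (-t * δ) ≤ Real.exp (L - 1) := by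
      apply Real.exp_le_exp.2
      have := neg_abs_le L
      linarith [htδ]
    have hexp2 : Real.exp (L - 1) < ε / (M + 1) := by
      rw [hL, Real.exp_sub, Real.exp_log hε']
      exact div_lt_self hε' (by linarith [Real.exp_one_gt_d9])
    calc ∑ κ ∈ p.support, p.coeff κ * Real.exp (t * f (fun i => (κ i : ℝ)) - t * f α)
        ≤ ∑ κ ∈ p.support, p.coeff κ * Real.exp (-t * δ) := Finset.sum_le_sum hbound
      _ = M * Real.exp (-t * δ) := by rw [← Finset.sum_mul]
      _ ≤ (M + 1) * Real.exp (-t * δ) := by nlinarith [Real.exp_pos (-t * δ)]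
      _ ≤ (M + 1) * Real.exp (L - 1) := by
          exact mul_le_mul_of_nonneg_left hexp1 (by linarith)
      _ < (M + 1) * (ε / (M + 1)) := mul_lt_mul_of_pos_left hexp2 (by linarith)
      _ = ε := by field_simp
  refine le_antisymm ?_ (le_ciInf hnonneg)
  by_contra h
  push_neg at h
  obtain ⟨z, hz⟩ := key _ h
  exact absurd (ciInf_le hbdd z) (not_le.2 hz)
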